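/- Let T' and T'' be tensors in ℝ^{n_1×⋯×n_d} having TR-representations with cores G_k', G_k'' and TR-ranks (r_0',…,r_d'), (r_0'',…,r_d'') respectively, with r_0' ≥ r_0''. Define cores G_k by: for 2 ≤ k ≤ d−1, G_k(i_k) is the block-diagonal matrix diag(G_k'(i_k), G_k''(i_k)) of size (r_{k−1}'+r_{k−1}'')×(r_k'+r_k''); G_1(i_1) is the r_0'×(r_1'+r_1'') matrix whose left block is G_1'(i_1) and whose right block is G_1''(i_1) stacked above a zero block of size (r_0'−r_0'')×r_1''; and G_d(i_d) is the (r_{d−1}'+r_{d−1}'')×r_0' matrix whose top block is G_d'(i_d) and whose bottom block is G_d''(i_d) concatenated horizontally with a zero block of size r_{d−1}''×(r_0'−r_0''). Then for all indices, Trace(G_1(i_1)·…·G_d(i_d)) = T'(i_1,…,i_d) + T''(i_1,…,i_d); i.e., the cores G_k form a TR-representation of T' + T'' with TR-ranks (r_0', r_1'+r_1'', …, r_{d−1}'+r_{d−1}'', r_0'). -/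
import Mathlib


/-- Cyclic successor on `Fin d`. -/
def finSucc {d : ℕ} (k : Fin d) : Fin d := ⟨(k.val + 1) % d, Nat.mod_lt _ k.pos⟩

/-- Value of the tensor-ring contraction of cores `G` at the multi-index `i`
(the trace of the product of the core matrices, in index form). -/
def trVal {d : ℕ} (n ρ : Fin d → ℕ)
    (G : ∀ k : Fin d, Fin (n k) → Matrix (Fin (ρ k)) (Fin (ρ (finSucc k))) ℝ)
    (i : ∀ k : Fin d, Fin (n k)) : ℝ :=
  ∑ α : ∀ k : Fin d, Fin (ρ k), ∏ k : Fin d, G k (i k) (α k) (α (finSucc k))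

/-- `(ρ 0, …, ρ (d-1), ρ 0)` is a TR-rank of `T`. -/
def IsTRRank {d : ℕ} (n ρ : Fin d → ℕ) (T : (∀ k : Fin d, Fin (n k)) → ℝ) : Prop :=
  ∃ G : ∀ k : Fin d, Fin (n k) → Matrix (Fin (ρ k)) (Fin (ρ (finSucc k))) ℝ,
    ∀ i, T i = trVal n ρ G i

/-- The `k`-th unfolding matrix of a tensor. -/
def unfold {d : ℕ} (n : Fin d → ℕ) (T : (∀ k : Fin d, Fin (n k)) → ℝ) (k : ℕ) :
    Matrix (∀ j : {j : Fin d // j.val < k}, Fin (n j.val))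
      (∀ j : {j : Fin d // ¬ j.val < k}, Fin (n j.val)) ℝ :=
  Matrix.of fun a b => T (fun j => if h : j.val < k then a ⟨j, h⟩ else b ⟨j, h⟩)

/-- Ranks of the sum of two TR-representations: the end-rank (at position `0`) is
`ρ' 0` (assuming `ρ'' 0 ≤ ρ' 0`), all other ranks are summed. -/
def addRank {d : ℕ} (ρ' ρ'' : Fin d → ℕ) (k : Fin d) : ℕ :=
  if k.val = 0 then ρ' k else ρ' k + ρ'' k

/-- Cores of the sum of two TR-representations: block-diagonal in the middle, with the
special stacking of Theorem `thm:add` for the first core (`k = 0`) and the last core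
(`finSucc k = 0`), in the case `ρ'' 0 ≤ ρ' 0`. -/
def addCore {d : ℕ} {n ρ' ρ'' : Fin d → ℕ}
    (G' : ∀ k : Fin d, Fin (n k) → Matrix (Fin (ρ' k)) (Fin (ρ' (finSucc k))) ℝ)
    (G'' : ∀ k : Fin d, Fin (n k) → Matrix (Fin (ρ'' k)) (Fin (ρ'' (finSucc k))) ℝ)
    (k : Fin d) (i : Fin (n k)) :
    Matrix (Fin (addRank ρ' ρ'' k)) (Fin (addRank ρ' ρ'' (finSucc k))) ℝ :=
  Matrix.of fun x y =>
    if hx : x.val < ρ' k then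
      if hy : y.val < ρ' (finSucc k) then G' k i ⟨x.val, hx⟩ ⟨y.val, hy⟩
      else
        if hk : k.val = 0 then
          if hx2 : x.val < ρ'' k then
            G'' k i ⟨x.val, hx2⟩
              ⟨y.val - ρ' (finSucc k), by
                have hyl := y.isLt
                simp only [addRank] at hyl
                split_ifs at hyl <;> omega⟩
          else 0
        else 0
    else
      if hy : y.val < ρ' (finSucc k) then
        if hk : (finSucc k).val = 0 then
          if hy2 : y.val < ρ'' (finSucc k) then
            G'' k i
              ⟨x.val - ρ' k, by
                have hxl := x.isLt
                simp only [addRank] at hxl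
                split_ifs at hxl <;> omega⟩
              ⟨y.val, hy2⟩
          else 0
        else 0
      else
        G'' k i
          ⟨x.val - ρ' k, by
            have hxl := x.isLt
            simp only [addRank] at hxl
            split_ifs at hxl <;> omega⟩
          ⟨y.val - ρ' (finSucc k), by
            have hyl := y.isLt
            simp only [addRank] at hyl
            split_ifs at hyl <;> omega⟩

section Aux

variable {d : ℕ} {n ρ' ρ'' : Fin d → ℕ}

lemma le_addRank (k : Fin d) : ρ' k ≤ addRank ρ' ρ'' k := by
  unfold addRank; split <;> omega

lemma addRank_of_eq (k : Fin d) (h : k.val = 0) : addRank ρ' ρ'' k = ρ' k := if_pos h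

lemma addRank_of_ne (k : Fin d) (h : k.val ≠ 0) : addRank ρ' ρ'' k = ρ' k + ρ'' k := if_neg h

lemma finSucc_val (k : Fin d) : (finSucc k).val = (k.val + 1) % d := rfl

/-- Left embedding of indices. -/
def embL (ρ'' : Fin d → ℕ) (β : ∀ k, Fin (ρ' k)) (k : Fin d) : Fin (addRank ρ' ρ'' k) :=
  ⟨β k, lt_of_lt_of_le (β k).isLt (le_addRank k)⟩

/-- Right embedding of indices. -/
def embR (ρ' : Fin d → ℕ) (hr : ∀ k : Fin d, k.val = 0 → ρ'' k ≤ ρ' k)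
    (β : ∀ k, Fin (ρ'' k)) (k : Fin d) : Fin (addRank ρ' ρ'' k) :=
  if h : k.val = 0 then
    ⟨β k, by rw [addRank_of_eq k h]; exact lt_of_lt_of_le (β k).isLt (hr k h)⟩
  else ⟨ρ' k + β k, by rw [addRank_of_ne k h]; omega⟩

lemma embL_val (β : ∀ k, Fin (ρ' k)) (k : Fin d) :
    (embL ρ'' β k : ℕ) = β k := rfl

lemma embR_val_eq (hr : ∀ k : Fin d, k.val = 0 → ρ'' k ≤ ρ' k) (β : ∀ k, Fin (ρ'' k))
    {k : Fin d} (h : k.val = 0) : (embR ρ' hr β k : ℕ) = β k := by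
  unfold embR; rw [dif_pos h]

lemma embR_val_ne (hr : ∀ k : Fin d, k.val = 0 → ρ'' k ≤ ρ' k) (β : ∀ k, Fin (ρ'' k))
    {k : Fin d} (h : k.val ≠ 0) : (embR ρ' hr β k : ℕ) = ρ' k + β k := by
  unfold embR; rw [dif_neg h]

variable (G' : ∀ k : Fin d, Fin (n k) → Matrix (Fin (ρ' k)) (Fin (ρ' (finSucc k))) ℝ)
  (G'' : ∀ k : Fin d, Fin (n k) → Matrix (Fin (ρ'' k)) (Fin (ρ'' (finSucc k))) ℝ)

lemma addCore_LL {k : Fin d} {i : Fin (n k)} {x : Fin (addRank ρ' ρ'' k)}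
    {y : Fin (addRank ρ' ρ'' (finSucc k))}
    (hx : (x : ℕ) < ρ' k) (hy : (y : ℕ) < ρ' (finSucc k)) :
    addCore G' G'' k i x y = G' k i ⟨x, hx⟩ ⟨y, hy⟩ := by
  simp only [addCore, Matrix.of_apply, dif_pos hx, dif_pos hy]

lemma addCore_0R {k : Fin d} {i : Fin (n k)} {x : Fin (addRank ρ' ρ'' k)}
    {y : Fin (addRank ρ' ρ'' (finSucc k))} (hk : k.val = 0)
    (hy : ¬ (y : ℕ) < ρ' (finSucc k)) (hx2 : (x : ℕ) < ρ'' k)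
    (hy2 : (y : ℕ) - ρ' (finSucc k) < ρ'' (finSucc k)) :
    addCore G' G'' k i x y = G'' k i ⟨x, hx2⟩ ⟨(y : ℕ) - ρ' (finSucc k), hy2⟩ := by
  have hx : (x : ℕ) < ρ' k := by
    have h1 := x.isLt; have h2 := addRank_of_eq (ρ' := ρ') (ρ'' := ρ'') k hk; omega
  simp only [addCore, Matrix.of_apply, dif_pos hx, dif_neg hy, dif_pos hk, dif_pos hx2]

lemma addCore_Rd {k : Fin d} {i : Fin (n k)} {x : Fin (addRank ρ' ρ'' k)}
    {y : Fin (addRank ρ' ρ'' (finSucc k))} (hsk : (finSucc k).val = 0)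
    (hx : ¬ (x : ℕ) < ρ' k) (hx2 : (x : ℕ) - ρ' k < ρ'' k)
    (hy2 : (y : ℕ) < ρ'' (finSucc k)) :
    addCore G' G'' k i x y = G'' k i ⟨(x : ℕ) - ρ' k, hx2⟩ ⟨y, hy2⟩ := by
  have hy : (y : ℕ) < ρ' (finSucc k) := by
    have h1 := y.isLt; have h2 := addRank_of_eq (ρ' := ρ') (ρ'' := ρ'') _ hsk; omega
  simp only [addCore, Matrix.of_apply, dif_neg hx, dif_pos hy, dif_pos hsk, dif_pos hy2]

lemma addCore_RR {k : Fin d} {i : Fin (n k)} {x : Fin (addRank ρ' ρ'' k)}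
    {y : Fin (addRank ρ' ρ'' (finSucc k))}
    (hx : ¬ (x : ℕ) < ρ' k) (hy : ¬ (y : ℕ) < ρ' (finSucc k))
    (hx2 : (x : ℕ) - ρ' k < ρ'' k) (hy2 : (y : ℕ) - ρ' (finSucc k) < ρ'' (finSucc k)) :
    addCore G' G'' k i x y = G'' k i ⟨(x : ℕ) - ρ' k, hx2⟩ ⟨(y : ℕ) - ρ' (finSucc k), hy2⟩ := by
  simp only [addCore, Matrix.of_apply, dif_neg hx, dif_neg hy]

lemma addCore_mid_iff {k : Fin d} {i : Fin (n k)} {x : Fin (addRank ρ' ρ'' k)}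
    {y : Fin (addRank ρ' ρ'' (finSucc k))} (hk : k.val ≠ 0) (hsk : (finSucc k).val ≠ 0)
    (hne : addCore G' G'' k i x y ≠ 0) :
    ((x : ℕ) < ρ' k ↔ (y : ℕ) < ρ' (finSucc k)) := by
  constructor
  · intro hx; by_contra hy
    exact hne (by simp only [addCore, Matrix.of_apply, dif_pos hx, dif_neg hy, dif_neg hk])
  · intro hy; by_contra hx
    exact hne (by simp only [addCore, Matrix.of_apply, dif_neg hx, dif_pos hy, dif_neg hsk])

lemma addCore_first_lt {k : Fin d} {i : Fin (n k)} {x : Fin (addRank ρ' ρ'' k)}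
    {y : Fin (addRank ρ' ρ'' (finSucc k))} (hk : k.val = 0)
    (hy : ¬ (y : ℕ) < ρ' (finSucc k)) (hne : addCore G' G'' k i x y ≠ 0) :
    (x : ℕ) < ρ'' k := by
  by_contra hx2
  have hx : (x : ℕ) < ρ' k := by
    have h1 := x.isLt; have h2 := addRank_of_eq (ρ' := ρ') (ρ'' := ρ'') k hk; omega
  exact hne (by simp only [addCore, Matrix.of_apply, dif_pos hx, dif_neg hy, dif_pos hk,
    dif_neg hx2])

end Aux

/-- Addition of two TR-representations with `ρ'' 0 ≤ ρ' 0`: the cores `addCore G' G''`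
form a TR-representation of `T' + T''` with TR-ranks
`(ρ' 0, ρ' 1 + ρ'' 1, …, ρ' (d-1) + ρ'' (d-1), ρ' 0)`. -/
theorem tr_add {d : ℕ} (hd : 2 ≤ d) (n ρ' ρ'' : Fin d → ℕ)
    (hr : ρ'' ⟨0, by omega⟩ ≤ ρ' ⟨0, by omega⟩)
    (G' : ∀ k : Fin d, Fin (n k) → Matrix (Fin (ρ' k)) (Fin (ρ' (finSucc k))) ℝ)
    (G'' : ∀ k : Fin d, Fin (n k) → Matrix (Fin (ρ'' k)) (Fin (ρ'' (finSucc k))) ℝ)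
    (T' T'' : (∀ k : Fin d, Fin (n k)) → ℝ)
    (hT' : ∀ i, T' i = trVal n ρ' G' i)
    (hT'' : ∀ i, T'' i = trVal n ρ'' G'' i) :
    ∀ i, trVal n (addRank ρ' ρ'') (addCore G' G'') i = T' i + T'' i := by
  intro i
  rw [hT' i, hT'' i]
  have hr' : ∀ k : Fin d, k.val = 0 → ρ'' k ≤ ρ' k := by
    intro k hk
    have hk0 : k = ⟨0, by omega⟩ := Fin.ext hk
    rw [hk0]; exact hr
  set e : ((∀ k, Fin (ρ' k)) ⊕ (∀ k, Fin (ρ'' k))) → (∀ k, Fin (addRank ρ' ρ'' k)) :=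
    Sum.elim (embL ρ'') (embR ρ' hr') with he
  -- injectivity of `e`
  have einj : Function.Injective e := by
    rintro (β | β) (γ | γ) h
    · congr 1
      funext k
      apply Fin.ext
      have hv : (e (Sum.inl β) k).val = (e (Sum.inl γ) k).val :=
        congrArg Fin.val (congrFun h k)
      exact hv
    · exfalso
      have hv : ((β ⟨1, by omega⟩ : Fin _) : ℕ) = ρ' ⟨1, by omega⟩ + γ ⟨1, by omega⟩ :=
        (congrArg Fin.val (congrFun h ⟨1, by omega⟩)).trans
          (embR_val_ne hr' γ (k := ⟨1, by omega⟩) one_ne_zero)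
      have := (β ⟨1, by omega⟩).isLt
      omega
    · exfalso
      have hv : ((γ ⟨1, by omega⟩ : Fin _) : ℕ) = ρ' ⟨1, by omega⟩ + β ⟨1, by omega⟩ :=
        (congrArg Fin.val (congrFun h.symm ⟨1, by omega⟩)).trans
          (embR_val_ne hr' β (k := ⟨1, by omega⟩) one_ne_zero)
      have := (γ ⟨1, by omega⟩).isLt
      omega
    · congr 1
      funext k
      apply Fin.ext
      have hv : (embR ρ' hr' β k : ℕ) = (embR ρ' hr' γ k : ℕ) :=
        congrArg Fin.val (congrFun h k)
      by_cases hk : k.val = 0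
      · rw [embR_val_eq hr' β hk, embR_val_eq hr' γ hk] at hv
        exact hv
      · rw [embR_val_ne hr' β hk, embR_val_ne hr' γ hk] at hv
        omega
  -- vanishing off the image of `e`
  have hzero : ∀ α : (∀ k, Fin (addRank ρ' ρ'' k)), α ∉ Finset.univ.image e →
      (∏ k, addCore G' G'' k (i k) (α k) (α (finSucc k))) = 0 := by
    intro α hα
    by_contra hne
    apply hα
    simp only [Finset.mem_image, Finset.mem_univ, true_and]
    have hfac : ∀ k, addCore G' G'' k (i k) (α k) (α (finSucc k)) ≠ 0 :=
      fun k h0 => hne (Finset.prod_eq_zero (Finset.mem_univ k) h0)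
    have h0lt : ∀ k : Fin d, k.val = 0 → (α k).val < ρ' k := by
      intro k hk
      have h1 := (α k).isLt
      have h2 := addRank_of_eq (ρ' := ρ') (ρ'' := ρ'') k hk
      omega
    have chain : ∀ m : ℕ, 1 ≤ m → ∀ hm : m < d,
        (((α ⟨m, hm⟩).val < ρ' ⟨m, hm⟩) ↔ ((α ⟨1, by omega⟩).val < ρ' ⟨1, by omega⟩)) := by
      intro m
      induction m with
      | zero => omega
      | succ p ih =>
        intro hm1 hm
        rcases Nat.lt_or_ge p 1 with h1 | h1
        · have hp : p = 0 := by omega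
          subst hp
          exact Iff.rfl
        · have hp : p < d := by omega
          have hs : finSucc (⟨p, hp⟩ : Fin d) = ⟨p + 1, hm⟩ :=
            Fin.ext (Nat.mod_eq_of_lt hm)
          have hstep := addCore_mid_iff G' G''
            (k := ⟨p, hp⟩) (x := α ⟨p, hp⟩) (y := α (finSucc ⟨p, hp⟩))
            (by show p ≠ 0; omega) (by rw [hs]; show p + 1 ≠ 0; omega) (hfac ⟨p, hp⟩)
          rw [hs] at hstep
          exact hstep.symm.trans (ih h1 hp)
    by_cases hb : (α ⟨1, by omega⟩).val < ρ' ⟨1, by omega⟩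
    · have hall : ∀ k : Fin d, (α k).val < ρ' k := by
        intro k
        by_cases hk : k.val = 0
        · exact h0lt k hk
        · have := (chain k.val (Nat.pos_of_ne_zero hk) k.isLt).mpr hb
          rwa [show (⟨k.val, k.isLt⟩ : Fin d) = k from Fin.ext rfl] at this
      exact ⟨Sum.inl (fun k => ⟨(α k).val, hall k⟩), funext fun k => Fin.ext rfl⟩
    · have hge : ∀ k : Fin d, k.val ≠ 0 → ρ' k ≤ (α k).val := by
        intro k hk
        have := chain k.val (Nat.pos_of_ne_zero hk) k.isLt
        rw [show (⟨k.val, k.isLt⟩ : Fin d) = k from Fin.ext rfl] at this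
        by_contra hlt
        exact hb (this.mp (by omega))
      have hs0 : (finSucc (⟨0, by omega⟩ : Fin d)) = ⟨1, by omega⟩ :=
        Fin.ext (by show (0 + 1) % d = 1; rw [Nat.mod_eq_of_lt (by omega)])
      have h00 : (α ⟨0, by omega⟩).val < ρ'' ⟨0, by omega⟩ := by
        apply addCore_first_lt G' G'' (k := ⟨0, by omega⟩) rfl ?_ (hfac ⟨0, by omega⟩)
        rw [hs0]
        exact not_lt.2 (hge ⟨1, by omega⟩ one_ne_zero)
      refine ⟨Sum.inr (fun k =>
        if h : k.val = 0 then
          ⟨(α k).val, by rw [show k = ⟨0, by omega⟩ from Fin.ext h]; exact h00⟩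
        else
          ⟨(α k).val - ρ' k, by
            have h1 := (α k).isLt
            have h2 := addRank_of_ne (ρ' := ρ') (ρ'' := ρ'') k h
            have h3 := hge k h
            omega⟩), ?_⟩
      funext k
      apply Fin.ext
      by_cases hk : k.val = 0
      · rw [show (e (Sum.inr _) k : ℕ) = _ from embR_val_eq hr' _ hk, dif_pos hk]
      · rw [show (e (Sum.inr _) k : ℕ) = _ from embR_val_ne hr' _ hk, dif_neg hk]
        have := hge k hk
        simp only []
        omega
  -- evaluation on the two pieces
  have haveL : ∀ β : (∀ k, Fin (ρ' k)),
      (∏ k, addCore G' G'' k (i k) (embL ρ'' β k) (embL ρ'' β (finSucc k))) =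
        ∏ k, G' k (i k) (β k) (β (finSucc k)) := by
    intro β
    refine Finset.prod_congr rfl fun k _ => ?_
    exact addCore_LL G' G'' ((β k).isLt) ((β (finSucc k)).isLt)
  have haveR : ∀ β : (∀ k, Fin (ρ'' k)),
      (∏ k, addCore G' G'' k (i k) (embR ρ' hr' β k) (embR ρ' hr' β (finSucc k))) =
        ∏ k, G'' k (i k) (β k) (β (finSucc k)) := by
    intro β
    refine Finset.prod_congr rfl fun k _ => ?_
    by_cases hk : k.val = 0
    · have hsk : (finSucc k).val ≠ 0 := by
        rw [finSucc_val, hk, Nat.mod_eq_of_lt (by omega)]; omega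
      have hxv := embR_val_eq hr' β hk
      have hyv := embR_val_ne hr' β hsk
      have hy : ¬ ((embR ρ' hr' β (finSucc k) : ℕ) < ρ' (finSucc k)) := by omega
      have hx2 : (embR ρ' hr' β k : ℕ) < ρ'' k := by rw [hxv]; exact (β k).isLt
      have hy2 : (embR ρ' hr' β (finSucc k) : ℕ) - ρ' (finSucc k) < ρ'' (finSucc k) := by
        have := (β (finSucc k)).isLt; omega
      rw [addCore_0R G' G'' hk hy hx2 hy2]
      have e1 : (⟨(embR ρ' hr' β k : ℕ), hx2⟩ : Fin (ρ'' k)) = β k := Fin.ext hxv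
      have e2 : (⟨(embR ρ' hr' β (finSucc k) : ℕ) - ρ' (finSucc k), hy2⟩ :
          Fin (ρ'' (finSucc k))) = β (finSucc k) := Fin.ext (by simp only []; omega)
      rw [e1, e2]
    · by_cases hsk : (finSucc k).val = 0
      · have hxv := embR_val_ne hr' β hk
        have hyv := embR_val_eq hr' β hsk
        have hx : ¬ ((embR ρ' hr' β k : ℕ) < ρ' k) := by omega
        have hx2 : (embR ρ' hr' β k : ℕ) - ρ' k < ρ'' k := by
          have := (β k).isLt; omega
        have hy2 : (embR ρ' hr' β (finSucc k) : ℕ) < ρ'' (finSucc k) := by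
          rw [hyv]; exact (β (finSucc k)).isLt
        rw [addCore_Rd G' G'' hsk hx hx2 hy2]
        have e1 : (⟨(embR ρ' hr' β k : ℕ) - ρ' k, hx2⟩ : Fin (ρ'' k)) = β k :=
          Fin.ext (by simp only []; omega)
        have e2 : (⟨(embR ρ' hr' β (finSucc k) : ℕ), hy2⟩ :
            Fin (ρ'' (finSucc k))) = β (finSucc k) := Fin.ext hyv
        rw [e1, e2]
      · have hxv := embR_val_ne hr' β hk
        have hyv := embR_val_ne hr' β hsk
        have hx : ¬ ((embR ρ' hr' β k : ℕ) < ρ' k) := by omega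
        have hy : ¬ ((embR ρ' hr' β (finSucc k) : ℕ) < ρ' (finSucc k)) := by omega
        have hx2 : (embR ρ' hr' β k : ℕ) - ρ' k < ρ'' k := by
          have := (β k).isLt; omega
        have hy2 : (embR ρ' hr' β (finSucc k) : ℕ) - ρ' (finSucc k) < ρ'' (finSucc k) := by
          have := (β (finSucc k)).isLt; omega
        rw [addCore_RR G' G'' hx hy hx2 hy2]
        have e1 : (⟨(embR ρ' hr' β k : ℕ) - ρ' k, hx2⟩ : Fin (ρ'' k)) = β k :=
          Fin.ext (by simp only []; omega)
        have e2 : (⟨(embR ρ' hr' β (finSucc k) : ℕ) - ρ' (finSucc k), hy2⟩ :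
            Fin (ρ'' (finSucc k))) = β (finSucc k) := Fin.ext (by simp only []; omega)
        rw [e1, e2]
  -- assemble
  simp only [trVal]
  rw [← Finset.sum_subset (Finset.subset_univ (Finset.univ.image e))
      (fun α _ hα => hzero α hα)]
  rw [Finset.sum_image (fun x _ y _ h => einj h)]
  rw [Fintype.sum_sum_type]
  congr 1
  · exact Finset.sum_congr rfl fun β _ => haveL β
  · exact Finset.sum_congr rfl fun β _ => haveR β
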